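/- Let C be a smooth projective curve of genus g over an algebraically closed field and S = {P} a single point. Then the Euclidean minimum M_S(K) equals the index of speciality μ(P), which is the largest Weierstrass gap of P; in particular g ≤ M_S(K) ≤ 2g - 1 when g ≥ 1. -/

import Mathlib

open scoped Classical

/-- An abstract model of a smooth projective (geometrically irreducible) curve over `k`:
`K` is its function field, `Point` its set of closed points, `v P` the normalized discrete
valuation at `P`, `Ω` the one-dimensional `K`-vector space of rational differential forms
with order function `ordω` and differential `d`, `genus` the genus, `Kcan` the divisor of a
fixed nonzero differential (a canonical divisor), and `ℓ D` the dimension of the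
Riemann-Roch space `L(D)`.  The axioms record the standard facts: valuations are
multiplicative and satisfy the ultrametric inequality, a nonzero function has a degree-zero
divisor of finite support, constants have no zeros or poles, `ordω` shifts by `v` under
`K`-scaling, `deg Kcan = 2g - 2`, the Riemann-Roch theorem, the characterization of `ℓ` as
the dimension of `L(D)`, and Serre duality identifying `ℓ(Kcan - D)` with
`dim Ω(-D)` (so `ℓ (Kcan - D) = 0` iff there is no nonzero differential `ω` with
`div ω ≥ D`). -/
structure AlgCurve (k : Type) [Field k] where
  K : Type
  [fieldK : Field K]
  [algK : Algebra k K]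
  Point : Type
  v : Point → K → ℤ
  Ω : Type
  [acgΩ : AddCommGroup Ω]
  [modΩ : Module K Ω]
  ordω : Point → Ω → ℤ
  d : K → Ω
  genus : ℕ
  Kcan : Point →₀ ℤ
  ℓ : (Point →₀ ℤ) → ℕ
  v_mul : ∀ P (x y : K), x ≠ 0 → y ≠ 0 → v P (x * y) = v P x + v P y
  v_add : ∀ P (x y : K), x ≠ 0 → y ≠ 0 → x + y ≠ 0 → min (v P x) (v P y) ≤ v P (x + y)
  v_finite : ∀ x : K, x ≠ 0 → (Function.support fun P => v P x).Finite
  v_sum_zero : ∀ x : K, x ≠ 0 → ∑ᶠ P, v P x = 0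
  v_const : ∀ c : k, c ≠ 0 → ∀ P, v P (algebraMap k K c) = 0
  v_uniformizer : ∀ P, ∃ x : K, x ≠ 0 ∧ v P x = 1
  ordω_smul : ∀ P (x : K) (ω : Ω), x ≠ 0 → ω ≠ 0 → ordω P (x • ω) = v P x + ordω P ω
  exists_canform : ∃ ω : Ω, ω ≠ 0 ∧ ∀ P, ordω P ω = Kcan P
  d_add : ∀ x y : K, d (x + y) = d x + d y
  d_mul : ∀ x y : K, d (x * y) = x • d y + y • d x
  d_const : ∀ c : k, d (algebraMap k K c) = 0
  deg_Kcan : (Kcan.sum fun _ n => n) = 2 * (genus : ℤ) - 2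
  riemannRoch : ∀ D : Point →₀ ℤ,
    (ℓ D : ℤ) - (ℓ (Kcan - D) : ℤ) = (D.sum fun _ n => n) + 1 - genus
  ℓ_spec : ∀ D : Point →₀ ℤ, ∀ n : ℕ, n ≤ ℓ D ↔
    ∃ s : Finset K, s.card = n ∧ LinearIndependent k (fun x : s => (x : K)) ∧
      ∀ x ∈ s, x ≠ 0 ∧ ∀ P, 0 ≤ v P x + D P
  serre : ∀ D : Point →₀ ℤ,
    ℓ (Kcan - D) = 0 ↔ ¬ ∃ ω : Ω, ω ≠ 0 ∧ ∀ P, D P ≤ ordω P ω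

attribute [instance] AlgCurve.fieldK AlgCurve.algK AlgCurve.acgΩ AlgCurve.modΩ

namespace AlgCurve

variable {k : Type} [Field k]

/-- The degree of a divisor. -/
def deg {C : AlgCurve k} (D : C.Point →₀ ℤ) : ℤ := D.sum fun _ n => n

/-- `Ω(-D) = 0`: there is no nonzero differential form `ω` with `div ω ≥ D`. -/
def OmegaZero (C : AlgCurve k) (D : C.Point →₀ ℤ) : Prop :=
  ¬ ∃ ω : C.Ω, ω ≠ 0 ∧ ∀ P, D P ≤ C.ordω P ω

/-- The index of speciality `μ(S)` of a finite set `S` of points: the minimal degree of a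
divisor supported on `S` with `Ω(-D) = 0`. -/
noncomputable def μ (C : AlgCurve k) (S : Set C.Point) : ℤ :=
  sInf {n : ℤ | ∃ D : C.Point →₀ ℤ, ↑D.support ⊆ S ∧ C.OmegaZero D ∧ deg D = n}

/-- Membership in the ring `O_S` of rational functions regular outside `S`. -/
def MemOS (C : AlgCurve k) (S : Set C.Point) (x : C.K) : Prop :=
  x ≠ 0 → ∀ P, P ∉ S → 0 ≤ C.v P x

/-- `deg_S x = -∑_{P ∈ S} v_P(x)` (meaningful for `x ≠ 0`). -/
noncomputable def degS (C : AlgCurve k) (S : Set C.Point) (x : C.K) : ℤ :=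
  -∑ᶠ P ∈ S, C.v P x

/-- `n` is a Weierstrass gap of `P`: `ℓ(nP) = ℓ((n-1)P)`. -/
def IsGap (C : AlgCurve k) (P : C.Point) (n : ℤ) : Prop :=
  C.ℓ (Finsupp.single P n) = C.ℓ (Finsupp.single P (n - 1))

end AlgCurve

namespace AlgCurve

variable {k : Type} [Field k] {C : AlgCurve k}

lemma v_one' (P : C.Point) : C.v P 1 = 0 := by
  have h := C.v_mul P 1 1 one_ne_zero one_ne_zero
  rw [one_mul] at h; omega

lemma v_neg' (P : C.Point) (x : C.K) (hx : x ≠ 0) : C.v P (-x) = C.v P x := by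
  have hm1 : (-1 : C.K) ≠ 0 := by norm_num
  have h := C.v_mul P (-1) (-1) hm1 hm1
  rw [neg_one_mul, neg_neg] at h
  rw [v_one'] at h
  have h2 := C.v_mul P (-1) x hm1 hx
  rw [neg_one_mul] at h2
  omega

lemma v_inv' (P : C.Point) (x : C.K) (hx : x ≠ 0) : C.v P x⁻¹ = -C.v P x := by
  have h := C.v_mul P x x⁻¹ hx (inv_ne_zero hx)
  rw [mul_inv_cancel₀ hx, v_one'] at h
  omega

lemma v_pow' (P : C.Point) (x : C.K) (hx : x ≠ 0) (n : ℕ) :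
    C.v P (x ^ n) = n * C.v P x := by
  induction n with
  | zero => simpa using v_one' P
  | succ n ih =>
      have h := C.v_mul P (x ^ n) x (pow_ne_zero n hx) hx
      rw [← pow_succ] at h
      rw [h, ih]; push_cast; ring

lemma v_smul' (P : C.Point) (c : k) (hc : c ≠ 0) (x : C.K) (hx : x ≠ 0) :
    C.v P (c • x) = C.v P x := by
  have hac : (algebraMap k C.K) c ≠ 0 := by
    intro h
    exact hc ((algebraMap k C.K).injective (by rw [h, map_zero]))
  rw [Algebra.smul_def, C.v_mul P _ x hac hx, C.v_const c hc P, zero_add]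

/-- The Riemann-Roch space `L(D)` as a `k`-submodule of `K`. -/
def LS (C : AlgCurve k) (D : C.Point →₀ ℤ) : Submodule k C.K where
  carrier := {x | x = 0 ∨ ∀ P, 0 ≤ C.v P x + D P}
  zero_mem' := Or.inl rfl
  add_mem' := fun {x y} hx hy => by
    rcases hx with rfl | hx
    · simpa using hy
    rcases hy with rfl | hy
    · simpa using Or.inr hx
    · by_cases hxy : x + y = 0
      · exact Or.inl hxy
      · refine Or.inr fun P => ?_
        by_cases hx0 : x = 0
        · subst hx0; simpa using hy P
        by_cases hy0 : y = 0
        · subst hy0; simpa using hx P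
        have h := C.v_add P x y hx0 hy0 hxy
        have h1 := hx P
        have h2 := hy P
        omega
  smul_mem' := fun c {x} hx => by
    rcases hx with rfl | hx
    · simp
    · by_cases hc : c = 0
      · subst hc; simp
      · by_cases hx0 : x = 0
        · subst hx0; simp
        · refine Or.inr fun P => ?_
          show 0 ≤ C.v P (c • x) + _
          rw [v_smul' P c hc x hx0]
          exact hx P

lemma mem_LS {D : C.Point →₀ ℤ} {x : C.K} :
    x ∈ C.LS D ↔ x = 0 ∨ ∀ P, 0 ≤ C.v P x + D P := Iff.rfl

lemma LS_mono {D D' : C.Point →₀ ℤ} (h : ∀ Q, D Q ≤ D' Q) : C.LS D ≤ C.LS D' := by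
  rintro x (rfl | hx)
  · exact Or.inl rfl
  · exact Or.inr fun P => le_trans (hx P) (by have := h P; omega)

/-- A linearly independent finset inside `L(D)` bounds `ℓ D` from below. -/
lemma ell_ge_of_indep {D : C.Point →₀ ℤ} (s : Finset C.K)
    (hs : LinearIndependent k (fun x : s => (x : C.K)))
    (hsub : ∀ x ∈ s, x ∈ C.LS D) : s.card ≤ C.ℓ D := by
  refine (C.ℓ_spec D s.card).mpr ⟨s, rfl, hs, fun x hx => ?_⟩
  have hne : x ≠ 0 := hs.ne_zero ⟨x, hx⟩
  exact ⟨hne, (hsub x hx).resolve_left hne⟩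

lemma exists_indep (D : C.Point →₀ ℤ) :
    ∃ s : Finset C.K, s.card = C.ℓ D ∧ LinearIndependent k (fun x : s => (x : C.K)) ∧
      ∀ x ∈ s, x ∈ C.LS D := by
  obtain ⟨s, hcard, hind, hmem⟩ := (C.ℓ_spec D (C.ℓ D)).mp le_rfl
  exact ⟨s, hcard, hind, fun x hx => Or.inr (hmem x hx).2⟩

lemma ℓ_mono {D D' : C.Point →₀ ℤ} (h : ∀ Q, D Q ≤ D' Q) : C.ℓ D ≤ C.ℓ D' := by
  obtain ⟨s, hcard, hind, hmem⟩ := exists_indep (C := C) D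
  rw [← hcard]
  exact ell_ge_of_indep s hind fun x hx => LS_mono h (hmem x hx)

lemma indep_insert {s : Finset C.K} (hs : LinearIndependent k (fun x : s => (x : C.K)))
    {a : C.K} (ha : a ∉ Submodule.span k (↑s : Set C.K)) :
    LinearIndependent k (fun x : (insert a s : Finset C.K) => (x : C.K)) := by
  have ha' : a ∉ (↑s : Set C.K) := fun h => ha (Submodule.subset_span h)
  have h2 : LinearIndependent k (fun b : ↥(insert a (↑s : Set C.K)) => (b : C.K)) :=
    (linearIndepOn_id_insert ha').mpr ⟨hs, ha⟩
  have hcoe : ((insert a s : Finset C.K) : Set C.K) = insert a (↑s : Set C.K) :=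
    Finset.coe_insert a s
  rw [← hcoe] at h2
  exact h2

/-- If some element of `L(D)` is not in `L(D')` (with `D' ≤ D`) then `ℓ D' < ℓ D`. -/
lemma ell_lt {D' D : C.Point →₀ ℤ} (hle : ∀ Q, D' Q ≤ D Q) {y : C.K}
    (hy : y ∈ C.LS D) (hy' : y ∉ C.LS D') : C.ℓ D' < C.ℓ D := by
  obtain ⟨s, hcard, hind, hmem⟩ := exists_indep (C := C) D'
  have hspan : Submodule.span k (↑s : Set C.K) ≤ C.LS D' :=
    Submodule.span_le.mpr fun x hx => hmem x hx
  have hys : y ∉ Submodule.span k (↑s : Set C.K) := fun h => hy' (hspan h)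
  have hyns : y ∉ s := fun h => hy' (hmem y h)
  have hcard2 : (insert y s : Finset C.K).card = s.card + 1 :=
    Finset.card_insert_of_notMem hyns
  have := ell_ge_of_indep (D := D) (insert y s) (indep_insert hind hys)
    (by
      intro x hx
      rcases Finset.mem_insert.mp hx with rfl | hx
      · exact hy
      · exact LS_mono hle (hmem x hx))
  omega

/-- Pencil lemma: if `ℓ D ≤ ℓ D' + 1`, `D' ≤ D`, `x ∈ L(D)` and `f ∈ L(D) \ L(D')`,
then some `x - c • f` lies in `L(D')`. -/
lemma pencil {D' D : C.Point →₀ ℤ} (hle : ∀ Q, D' Q ≤ D Q)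
    (hdim : C.ℓ D ≤ C.ℓ D' + 1) {x f : C.K} (hx : x ∈ C.LS D)
    (hf : f ∈ C.LS D) (hf' : f ∉ C.LS D') :
    ∃ c : k, x - c • f ∈ C.LS D' := by
  by_contra hcon
  push_neg at hcon
  have hx' : x ∉ C.LS D' := by
    have := hcon 0
    simpa using this
  have hxf : x ≠ f := by
    intro h
    have := hcon 1
    rw [h, one_smul, sub_self] at this
    exact this (Submodule.zero_mem _)
  obtain ⟨s, hcard, hind, hmem⟩ := exists_indep (C := C) D'
  have hspan : Submodule.span k (↑s : Set C.K) ≤ C.LS D' :=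
    Submodule.span_le.mpr fun z hz => hmem z hz
  have hfs : f ∉ Submodule.span k (↑s : Set C.K) := fun h => hf' (hspan h)
  have hfns : f ∉ s := fun h => hf' (hmem f h)
  have hind2 := indep_insert hind hfs
  have hxsp : x ∉ Submodule.span k (↑(insert f s : Finset C.K) : Set C.K) := by
    rw [Finset.coe_insert]
    intro h
    obtain ⟨a, z, hz, hxz⟩ := Submodule.mem_span_insert.mp h
    have : x - a • f ∈ C.LS D' := by
      have : x - a • f = z := by rw [hxz]; ring
      rw [this]; exact hspan hz
    exact hcon a this
  have hxns : x ∉ (insert f s : Finset C.K) := by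
    rw [Finset.mem_insert]
    rintro (rfl | h)
    · exact hxf rfl
    · exact hx' (hmem x h)
  have hind3 := indep_insert hind2 (by
    intro h
    exact hxsp h)
  have hcard3 : (insert x (insert f s) : Finset C.K).card = s.card + 2 := by
    rw [Finset.card_insert_of_notMem hxns, Finset.card_insert_of_notMem hfns]
  have hbig := ell_ge_of_indep (D := D) (insert x (insert f s)) hind3
    (by
      intro z hz
      rcases Finset.mem_insert.mp hz with rfl | hz
      · exact hx
      rcases Finset.mem_insert.mp hz with rfl | hz
      · exact hf
      · exact LS_mono hle (hmem z hz))
  omega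

lemma exists_diff {D' D : C.Point →₀ ℤ} (hlt : C.ℓ D' < C.ℓ D) :
    ∃ f, f ∈ C.LS D ∧ f ∉ C.LS D' := by
  obtain ⟨s, hcard, hind, hmem⟩ := exists_indep (C := C) D
  by_contra h
  push_neg at h
  have := ell_ge_of_indep (D := D') s hind fun x hx => h x (hmem x hx)
  omega

end AlgCurve
namespace AlgCurve

variable {k : Type} [Field k] {C : AlgCurve k}

lemma deg_single (P : C.Point) (n : ℤ) : deg (Finsupp.single P n) = n := by
  unfold deg
  exact Finsupp.sum_single_index rfl

lemma deg_add (A B : C.Point →₀ ℤ) : deg (A + B) = deg A + deg B := by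
  unfold deg
  exact Finsupp.sum_add_index' (fun _ => rfl) (fun _ _ _ => rfl)

lemma deg_sub (A B : C.Point →₀ ℤ) : deg (A - B) = deg A - deg B := by
  unfold deg
  exact Finsupp.sum_sub_index (fun _ _ _ => rfl)

lemma deg_finsum (D : C.Point →₀ ℤ) : ∑ᶠ Q, (D Q : ℤ) = deg D := by
  unfold deg
  rw [Finsupp.sum]
  exact finsum_eq_finset_sum_of_support_subset _ (by
    intro a ha
    simpa [Finsupp.mem_support_iff] using ha)

lemma ell_zero_of_deg_neg {D : C.Point →₀ ℤ} (h : deg D < 0) : C.ℓ D = 0 := by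
  by_contra hne
  have h1 : 1 ≤ C.ℓ D := Nat.one_le_iff_ne_zero.mpr hne
  obtain ⟨s, hcard, hind, hmem⟩ := (C.ℓ_spec D 1).mp h1
  obtain ⟨x, hx⟩ := Finset.card_eq_one.mp hcard
  have hx' := hmem x (by simp [hx])
  have hsum : ∑ᶠ Q, C.v Q x = 0 := C.v_sum_zero x hx'.1
  have hfin1 : (Function.support fun Q => C.v Q x).Finite := C.v_finite x hx'.1
  have hfin2 : (Function.support fun Q => (D Q : ℤ)).Finite := by
    rw [Finsupp.fun_support_eq]; exact D.support.finite_toSet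
  have hpos : 0 ≤ ∑ᶠ Q, (C.v Q x + D Q) := finsum_nonneg fun Q => hx'.2 Q
  rw [finsum_add_distrib hfin1 hfin2, hsum, deg_finsum] at hpos
  omega

/-- Riemann-Roch when the speciality index vanishes. -/
lemma ell_eq_of {D : C.Point →₀ ℤ} (h : C.ℓ (C.Kcan - D) = 0) :
    (C.ℓ D : ℤ) = deg D + 1 - C.genus := by
  have := C.riemannRoch D
  rw [h] at this
  unfold deg
  omega

lemma omegaZero_iff (D : C.Point →₀ ℤ) :
    C.OmegaZero D ↔ C.ℓ (C.Kcan - D) = 0 := (C.serre D).symm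

lemma single_le_single {P : C.Point} {a b : ℤ} (h : a ≤ b) (Q : C.Point) :
    Finsupp.single P a Q ≤ Finsupp.single P b Q := by
  simp only [Finsupp.single_apply]
  split <;> omega

/-- `T`-monotonicity: if `ℓ(K - nP) = 0` and `n ≤ m` then `ℓ(K - mP) = 0`. -/
lemma specialityZero_mono {P : C.Point} {n m : ℤ} (h : C.ℓ (C.Kcan - Finsupp.single P n) = 0)
    (hnm : n ≤ m) : C.ℓ (C.Kcan - Finsupp.single P m) = 0 := by
  rw [← omegaZero_iff] at h ⊢
  intro ⟨ω, hω, hall⟩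
  exact h ⟨ω, hω, fun Q => le_trans (single_le_single hnm Q) (hall Q)⟩

/-- the jump lemma: adding one point to the divisor increases `ℓ` by exactly 1 in the
non-special range. -/
lemma jump {P : C.Point} {E : C.Point →₀ ℤ} (hE : ∀ Q, 0 ≤ E Q) {m : ℤ}
    (hK0 : C.ℓ (C.Kcan - Finsupp.single P m) = 0)
    (hK1 : C.ℓ (C.Kcan - Finsupp.single P (m + 1)) = 0) :
    C.ℓ (Finsupp.single P (m + 1) + E) = C.ℓ (Finsupp.single P m + E) + 1 := by
  have hz0 : C.ℓ (C.Kcan - (Finsupp.single P m + E)) = 0 := by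
    have := ℓ_mono (C := C) (D := C.Kcan - (Finsupp.single P m + E))
      (D' := C.Kcan - Finsupp.single P m) (fun Q => by
        simp only [Finsupp.sub_apply, Finsupp.add_apply]
        have := hE Q; omega)
    omega
  have hz1 : C.ℓ (C.Kcan - (Finsupp.single P (m + 1) + E)) = 0 := by
    have := ℓ_mono (C := C) (D := C.Kcan - (Finsupp.single P (m + 1) + E))
      (D' := C.Kcan - Finsupp.single P (m + 1)) (fun Q => by
        simp only [Finsupp.sub_apply, Finsupp.add_apply]
        have := hE Q; omega)
    omega
  have h0 := ell_eq_of hz0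
  have h1 := ell_eq_of hz1
  rw [deg_add, deg_single] at h0 h1
  omega

end AlgCurve
namespace AlgCurve

variable {k : Type} [Field k] {C : AlgCurve k}

/-- Pole reduction: any `x` with poles bounded by `mP + E` can be written as
`y + r` with `y` having poles only at `P` and `r` having poles bounded by `μ₀P + E`. -/
lemma reduce {P : C.Point} {E : C.Point →₀ ℤ} (hE : ∀ Q, 0 ≤ E Q) (hEP : E P = 0)
    {μ₀ : ℤ} (hT : ∀ n, μ₀ ≤ n → C.ℓ (C.Kcan - Finsupp.single P n) = 0) :
    ∀ m, μ₀ ≤ m → ∀ x ∈ C.LS (Finsupp.single P m + E),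
      ∃ y ∈ C.LS (Finsupp.single P m), x - y ∈ C.LS (Finsupp.single P μ₀ + E) := by
  refine Int.le_induction ?_ ?_
  · intro x hx
    exact ⟨0, Submodule.zero_mem _, by simpa using hx⟩
  · intro m hm ih x hx
    by_cases hx0 : x ∈ C.LS (Finsupp.single P m + E)
    · obtain ⟨y, hy, hr⟩ := ih x hx0
      exact ⟨y, LS_mono (single_le_single (by omega)) hy, hr⟩
    · -- need an element `f` with pole of exact order `m+1` at `P` and nowhere else
      have hK0 : C.ℓ (C.Kcan - Finsupp.single P m) = 0 := hT m (by omega)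
      have hK1 : C.ℓ (C.Kcan - Finsupp.single P (m + 1)) = 0 := hT (m + 1) (by omega)
      have hjump0 : C.ℓ (Finsupp.single P (m + 1)) = C.ℓ (Finsupp.single P m) + 1 := by
        have := jump (C := C) (P := P) (E := 0) (fun Q => le_refl 0) hK0 hK1
        simpa using this
      have hjumpE := jump (C := C) (P := P) (E := E) hE hK0 hK1
      obtain ⟨f, hf1, hf0⟩ := exists_diff (C := C)
        (D' := Finsupp.single P m) (D := Finsupp.single P (m + 1)) (by omega)
      -- f has exact pole order m+1 at P and is regular elsewhere
      have hfne : f ≠ 0 := fun h => hf0 (h ▸ Submodule.zero_mem _)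
      have hfv : ∀ Q, 0 ≤ C.v Q f + Finsupp.single P (m + 1) Q :=
        hf1.resolve_left hfne
      have hfvP : C.v P f = -(m + 1) := by
        by_contra hne
        apply hf0
        refine Or.inr fun Q => ?_
        by_cases hQ : Q = P
        · rw [hQ]
          have := hfv P
          simp only [Finsupp.single_eq_same] at this ⊢
          omega
        · have := hfv Q
          simp only [Finsupp.single_apply,
            if_neg (show P ≠ Q from fun h => hQ h.symm)] at this ⊢
          omega
      have hfD1 : f ∈ C.LS (Finsupp.single P (m + 1) + E) :=
        LS_mono (fun Q => by simp only [Finsupp.add_apply]; have := hE Q; omega) hf1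
      have hfD0 : f ∉ C.LS (Finsupp.single P m + E) := by
        rintro (rfl | h)
        · exact hfne rfl
        · have := h P
          simp only [Finsupp.add_apply, Finsupp.single_eq_same, hEP] at this
          omega
      obtain ⟨c, hc⟩ := pencil (C := C)
        (D' := Finsupp.single P m + E) (D := Finsupp.single P (m + 1) + E)
        (fun Q => by
          simp only [Finsupp.add_apply]
          have := single_le_single (P := P) (a := m) (b := m + 1) (by omega) Q
          omega)
        (by omega) hx hfD1 hfD0
      obtain ⟨y', hy', hr'⟩ := ih (x - c • f) hc
      refine ⟨c • f + y', ?_, ?_⟩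
      · exact Submodule.add_mem _
          (Submodule.smul_mem _ c (LS_mono (fun Q => by simp) hf1))
          (LS_mono (single_le_single (by omega)) hy')
      · have : x - (c • f + y') = x - c • f - y' := by ring
        rw [this]
        exact hr'

end AlgCurve

/-- For `S = {P}` a single point, the Euclidean minimum `M_S(K)` equals the index of
speciality `μ(P)`, which is the largest Weierstrass gap of `P`; in particular
`g ≤ M_S(K) ≤ 2g - 1`. -/
theorem stmt14 (k : Type) [Field k] [IsAlgClosed k] (C : AlgCurve k)
    (hg : 1 ≤ C.genus) (P : C.Point) :
    -- M_{{P}}(K) ≤ μ({P}) :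
    (∀ x : C.K, ∃ y : C.K, C.MemOS {P} y ∧ (x = y ∨ C.degS {P} (x - y) ≤ C.μ {P})) ∧
    -- M_{{P}}(K) ≥ μ({P}) :
    (∃ x : C.K, ∀ y : C.K, C.MemOS {P} y → x ≠ y ∧ C.μ {P} ≤ C.degS {P} (x - y)) ∧
    -- μ({P}) is the largest Weierstrass gap of P :
    IsGreatest {n : ℤ | 1 ≤ n ∧ C.IsGap P n} (C.μ {P}) ∧
    -- g ≤ M_{{P}}(K) = μ({P}) ≤ 2g - 1 :
    (C.genus : ℤ) ≤ C.μ {P} ∧ C.μ {P} ≤ 2 * (C.genus : ℤ) - 1 := by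
  classical
  open AlgCurve in
  set g : ℕ := C.genus with hgdef
  -- the set of "non-special" pole orders at P
  set T : Set ℤ := {n : ℤ | C.ℓ (C.Kcan - Finsupp.single P n) = 0} with hTdef
  have hdegK : deg C.Kcan = 2 * (g : ℤ) - 2 := C.deg_Kcan
  -- μ {P} is the infimum of T
  have hμset : {n : ℤ | ∃ D : C.Point →₀ ℤ, ↑D.support ⊆ ({P} : Set C.Point) ∧
      C.OmegaZero D ∧ deg D = n} = T := by
    ext n
    constructor
    · rintro ⟨D, hsupp, hoz, rfl⟩
      have hD : D = Finsupp.single P (D P) := by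
        ext Q
        by_cases hQ : Q = P
        · rw [hQ, Finsupp.single_eq_same]
        · have hDQ : D Q = 0 := by
            by_contra h
            exact hQ (hsupp (Finset.mem_coe.mpr (Finsupp.mem_support_iff.mpr h)))
          rw [hDQ, Finsupp.single_apply, if_neg (fun h => hQ h.symm)]
      have hdeg : deg D = D P := by
        conv_lhs => rw [hD]
        exact deg_single P (D P)
      rw [omegaZero_iff] at hoz
      show C.ℓ (C.Kcan - Finsupp.single P (deg D)) = 0
      rw [hdeg, ← hD]
      exact hoz
    · intro hn
      refine ⟨Finsupp.single P n, ?_, (omegaZero_iff _).mpr hn, deg_single P n⟩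
      intro Q hQ
      have := Finsupp.support_single_subset (Finset.mem_coe.mp hQ)
      simpa using this
  have hμ : C.μ {P} = sInf T := by
    unfold AlgCurve.μ
    rw [hμset]
  have h2g : (2 * (g : ℤ) - 1) ∈ T := by
    show C.ℓ _ = 0
    apply ell_zero_of_deg_neg
    rw [deg_sub, deg_single, hdegK]
    omega
  have hg1 : ((g : ℤ) - 1) ∉ T := by
    intro hmem
    have hone : (1 : C.K) ∈ C.LS (Finsupp.single P ((g : ℤ) - 1)) := by
      refine Or.inr fun Q => ?_
      rw [v_one']
      simp only [Finsupp.single_apply, zero_add]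
      split <;> omega
    have hsing : LinearIndependent k (fun x : ({1} : Finset C.K) => (x : C.K)) := by
      letI : Unique (({1} : Finset C.K)) :=
        ⟨⟨⟨1, Finset.mem_singleton_self 1⟩⟩, by
          rintro ⟨a, ha⟩
          simp [Finset.mem_singleton.mp ha]⟩
      exact linearIndependent_unique_iff.mpr
        (show (1 : C.K) ≠ 0 from one_ne_zero)
    have h1le : 1 ≤ C.ℓ (Finsupp.single P ((g : ℤ) - 1)) := by
      have := ell_ge_of_indep (D := Finsupp.single P ((g : ℤ) - 1)) {1} hsing
        (fun x hx => by rwa [Finset.mem_singleton.mp hx])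
      simpa using this
    have hrr := C.riemannRoch (Finsupp.single P ((g : ℤ) - 1))
    have hd : ((Finsupp.single P ((g : ℤ) - 1)).sum fun _ n => n) = (g : ℤ) - 1 :=
      deg_single P _
    rw [hd] at hrr
    have hmem' : C.ℓ (C.Kcan - Finsupp.single P ((g : ℤ) - 1)) = 0 := hmem
    omega
  have hbelow : ∀ n ∈ T, (g : ℤ) ≤ n := by
    intro n hn
    by_contra h
    push_neg at h
    exact hg1 (specialityZero_mono hn (by omega))
  have hne : T.Nonempty := ⟨2 * (g : ℤ) - 1, h2g⟩
  have hbdd : BddBelow T := ⟨(g : ℤ), fun n hn => hbelow n hn⟩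
  have hmem : sInf T ∈ T := Int.csInf_mem hne hbdd
  have hlow : (g : ℤ) ≤ sInf T := le_csInf hne hbelow
  have hup : sInf T ≤ 2 * (g : ℤ) - 1 := csInf_le hbdd h2g
  set m : ℤ := sInf T with hmdef
  have hm1 : m - 1 ∉ T := fun h => by have := csInf_le hbdd h; omega
  have hmemℓ : C.ℓ (C.Kcan - Finsupp.single P m) = 0 := hmem
  have hTall : ∀ n, m ≤ n → C.ℓ (C.Kcan - Finsupp.single P n) = 0 :=
    fun n hn => specialityZero_mono hmemℓ hn
  -- ℓ values around the gap
  have hℓm : (C.ℓ (Finsupp.single P m) : ℤ) = m + 1 - g := by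
    have := ell_eq_of hmemℓ
    rwa [deg_single] at this
  have hK' : C.ℓ (C.Kcan - Finsupp.single P (m - 1)) ≠ 0 := hm1
  have hrr' := C.riemannRoch (Finsupp.single P (m - 1))
  have hd' : ((Finsupp.single P (m - 1)).sum fun _ n => n) = m - 1 := deg_single P _
  rw [hd'] at hrr'
  have hmono : C.ℓ (Finsupp.single P (m - 1)) ≤ C.ℓ (Finsupp.single P m) :=
    ℓ_mono (single_le_single (by omega))
  have hgapm : C.ℓ (Finsupp.single P m) = C.ℓ (Finsupp.single P (m - 1)) := by omega
  -- the gap property implies L(mP) = L((m-1)P)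
  have hnoy : ∀ y, y ∈ C.LS (Finsupp.single P m) → y ∈ C.LS (Finsupp.single P (m - 1)) := by
    intro y hy
    by_contra h
    have := ell_lt (single_le_single (by omega : m - 1 ≤ m)) hy h
    omega
  refine ⟨?_, ?_, ⟨⟨by rw [hμ]; omega, by show C.IsGap P (C.μ {P}); rw [hμ]; exact hgapm⟩, ?_⟩,
    by rw [hμ]; omega, by rw [hμ]; omega⟩
  · -- M ≤ μ
    intro x
    by_cases hx : x = 0
    · exact ⟨0, fun h => absurd rfl h, Or.inl (by rw [hx])⟩
    · have hfE : ∀ a, (if a = P then 0 else max 0 (-C.v a x)) ≠ 0 →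
          a ∈ (C.v_finite x hx).toFinset := by
        intro a ha
        rw [Set.Finite.mem_toFinset]
        show C.v a x ≠ 0
        intro h0
        apply ha
        by_cases haP : a = P
        · simp [haP]
        · simp [haP, h0]
      set E : C.Point →₀ ℤ := Finsupp.onFinset (C.v_finite x hx).toFinset
        (fun Q => if Q = P then 0 else max 0 (-C.v Q x)) hfE with hEdef
      have hEapp : ∀ Q, E Q = if Q = P then 0 else max 0 (-C.v Q x) := fun Q => rfl
      have hE : ∀ Q, 0 ≤ E Q := by
        intro Q
        rw [hEapp]
        split
        · exact le_refl 0
        · exact le_max_left 0 _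
      have hEP : E P = 0 := by rw [hEapp]; simp
      set mt : ℤ := max m (-C.v P x) with hmtdef
      have hmt : m ≤ mt := le_max_left _ _
      have hxmem : x ∈ C.LS (Finsupp.single P mt + E) := by
        refine Or.inr fun Q => ?_
        rw [Finsupp.add_apply, hEapp]
        by_cases hQ : Q = P
        · rw [hQ]
          simp only [Finsupp.single_eq_same, if_pos rfl]
          have : -C.v P x ≤ mt := le_max_right _ _
          omega
        · rw [Finsupp.single_apply, if_neg (fun h => hQ h.symm), if_neg hQ]
          omega
      obtain ⟨y, hy, hr⟩ := reduce hE hEP hTall mt hmt x hxmem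
      refine ⟨y, ?_, ?_⟩
      · intro hy0 Q hQ
        have hQP : Q ≠ P := by simpa using hQ
        rcases hy with rfl | h
        · exact absurd rfl hy0
        · have := h Q
          rw [Finsupp.single_apply, if_neg (fun h' => hQP h'.symm)] at this
          omega
      · by_cases hxy : x = y
        · exact Or.inl hxy
        · refine Or.inr ?_
          rw [hμ]
          have hd0 : x - y ≠ 0 := sub_ne_zero.mpr hxy
          rcases hr with h | h
          · exact absurd h hd0
          · have hP := h P
            rw [Finsupp.add_apply, Finsupp.single_eq_same, hEP] at hP
            show -∑ᶠ Q ∈ ({P} : Set C.Point), C.v Q (x - y) ≤ m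
            rw [finsum_mem_singleton]
            omega
  · -- M ≥ μ
    obtain ⟨t, ht0, ht1⟩ := C.v_uniformizer P
    set n : ℕ := m.toNat with hndef
    have hn : (n : ℤ) = m := Int.toNat_of_nonneg (by omega)
    set x : C.K := (t ^ n)⁻¹ with hxdef
    have htn : t ^ n ≠ 0 := pow_ne_zero n ht0
    have hx0 : x ≠ 0 := inv_ne_zero htn
    have hvx : C.v P x = -m := by
      rw [hxdef, v_inv' P _ htn, v_pow' P t ht0 n, ht1, mul_one, hn]
    refine ⟨x, ?_⟩
    intro y hyOS
    by_cases hy0 : y = 0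
    · refine ⟨fun h => hx0 (h.trans hy0), ?_⟩
      rw [hμ, hy0, sub_zero]
      show m ≤ -∑ᶠ Q ∈ ({P} : Set C.Point), C.v Q x
      rw [finsum_mem_singleton]
      omega
    · have hyreg : ∀ Q, Q ≠ P → 0 ≤ C.v Q y := fun Q hQ => hyOS hy0 Q (by simpa using hQ)
      have hvy : C.v P y ≠ -m := by
        intro hvyP
        have hymem : y ∈ C.LS (Finsupp.single P m) := by
          refine Or.inr fun Q => ?_
          by_cases hQ : Q = P
          · rw [hQ, Finsupp.single_eq_same, hvyP]; omega
          · rw [Finsupp.single_apply, if_neg (fun h => hQ h.symm)]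
            have := hyreg Q hQ
            omega
        rcases hnoy y hymem with rfl | h
        · exact hy0 rfl
        · have := h P
          rw [Finsupp.single_eq_same, hvyP] at this
          omega
      have hxy : x ≠ y := by
        intro h
        rw [h] at hvx
        exact hvy hvx
      refine ⟨hxy, ?_⟩
      have hd0 : x - y ≠ 0 := sub_ne_zero.mpr hxy
      have hclaim : C.v P (x - y) ≤ -m := by
        by_contra hgt
        push_neg at hgt
        have hA := C.v_add P x (-(x - y)) hx0 (neg_ne_zero.mpr hd0)
          (show x + -(x - y) ≠ 0 by rw [show x + -(x - y) = y from by ring]; exact hy0)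
        rw [show x + -(x - y) = y from by ring, v_neg' P _ hd0] at hA
        have hB := C.v_add P (x - y) y hd0 hy0
          (show x - y + y ≠ 0 by rw [show x - y + y = x from by ring]; exact hx0)
        rw [show x - y + y = x from by ring] at hB
        omega
      rw [hμ]
      show m ≤ -∑ᶠ Q ∈ ({P} : Set C.Point), C.v Q (x - y)
      rw [finsum_mem_singleton]
      omega
  · -- largest gap
    rintro q ⟨hq1, hqgap⟩
    rw [hμ]
    by_contra h
    push_neg at h
    have hqT : C.ℓ (C.Kcan - Finsupp.single P q) = 0 := hTall q (by omega)
    have hqT' : C.ℓ (C.Kcan - Finsupp.single P (q - 1)) = 0 := hTall (q - 1) (by omega)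
    have e1 := ell_eq_of hqT
    have e2 := ell_eq_of hqT'
    rw [deg_single] at e1 e2
    have : C.ℓ (Finsupp.single P q) = C.ℓ (Finsupp.single P (q - 1)) := hqgap
    omega
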